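/- Let X be a real Banach space. If every pair (A,B) of nonempty closed bounded convex subsets of X is semisharp proximal, then X is strictly convex. -/

import Mathlib

open Filter Topology

variable {X : Type*} [NormedAddCommGroup X] [NormedSpace ℝ X]

/-- The distance between two sets: `d(A,B) = inf {‖x−y‖ : x ∈ A, y ∈ B}`. -/
noncomputable def setD (A B : Set X) : ℝ :=
  sInf {r : ℝ | ∃ x ∈ A, ∃ y ∈ B, r = ‖x - y‖}

/-- The diameter-type quantity `δ(A,B) = sup {‖x−y‖ : x ∈ A, y ∈ B}`. -/
noncomputable def setDelta (A B : Set X) : ℝ :=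
  sSup {r : ℝ | ∃ x ∈ A, ∃ y ∈ B, r = ‖x - y‖}

/-- `d(z,B) = inf {‖z−y‖ : y ∈ B}`. -/
noncomputable def ptD (z : X) (B : Set X) : ℝ :=
  sInf {r : ℝ | ∃ y ∈ B, r = ‖z - y‖}

/-- `δ(z,B) = sup {‖z−y‖ : y ∈ B}`. -/
noncomputable def ptDelta (z : X) (B : Set X) : ℝ :=
  sSup {r : ℝ | ∃ y ∈ B, r = ‖z - y‖}

/-- A pair `(A,B)` is semisharp proximal. -/
def SemisharpProximal (A B : Set X) : Prop :=
  (∀ x ∈ A, ∀ y ∈ B, ∀ z ∈ B, ‖x - y‖ = setD A B → ‖x - z‖ = setD A B → y = z) ∧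
  (∀ y ∈ B, ∀ x ∈ A, ∀ z ∈ A, ‖x - y‖ = setD A B → ‖z - y‖ = setD A B → x = z)

/-- The pair `(A,B)` has property UC. -/
def PropertyUC (A B : Set X) : Prop :=
  ∀ x y z : ℕ → X, (∀ n, x n ∈ A) → (∀ n, y n ∈ A) → (∀ n, z n ∈ B) →
    Tendsto (fun n => ‖x n - z n‖) atTop (𝓝 (setD A B)) →
    Tendsto (fun n => ‖y n - z n‖) atTop (𝓝 (setD A B)) →
    Tendsto (fun n => ‖x n - y n‖) atTop (𝓝 (0 : ℝ))

/-- Weak convergence of a sequence. -/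
def WeakConv (u : ℕ → X) (x : X) : Prop :=
  ∀ f : X →L[ℝ] ℝ, Tendsto (fun n => f (u n)) atTop (𝓝 (f x))

/-- The Kadec-Klee property of a normed space. -/
def KadecKleeProp (X : Type*) [NormedAddCommGroup X] [NormedSpace ℝ X] : Prop :=
  ∀ (u : ℕ → X) (x : X), WeakConv u x →
    Tendsto (fun n => ‖u n‖) atTop (𝓝 ‖x‖) → Tendsto u atTop (𝓝 x)

/-- `A` is weak approximatively compact with respect to `B`. -/
def WeakApproxCompactWrt (A B : Set X) : Prop :=
  ∀ u : ℕ → X, (∀ n, u n ∈ A) →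
    Tendsto (fun n => ptD (u n) B) atTop (𝓝 (setD A B)) →
    ∃ a ∈ A, ∃ φ : ℕ → ℕ, StrictMono φ ∧ WeakConv (u ∘ φ) a

/-- `A₀`, the set of points of `A` that realize the distance `d(A,B)`. -/
def proxA (A B : Set X) : Set X := {x ∈ A | ∃ y ∈ B, ‖x - y‖ = setD A B}

/-- `B₀`, the set of points of `B` that realize the distance `d(A,B)`. -/
def proxB (A B : Set X) : Set X := {y ∈ B | ∃ x ∈ A, ‖x - y‖ = setD A B}

/-- The pair `(A,B)` is proximal: `A = A₀` and `B = B₀`. -/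
def ProximalPair (A B : Set X) : Prop := A = proxA A B ∧ B = proxB A B

/-- `r(H₁,H₂) = inf {δ(x,H₂) : x ∈ H₁}`. -/
noncomputable def rr (H1 H2 : Set X) : ℝ := sInf {t : ℝ | ∃ x ∈ H1, t = ptDelta x H2}

/-- `R(H₁,H₂) = max {r(H₁,H₂), r(H₂,H₁)}`. -/
noncomputable def RR (H1 H2 : Set X) : ℝ := max (rr H1 H2) (rr H2 H1)

/-- `(H₁,H₂) ∈ Υ(A,B)`: nonempty closed bounded convex proximal sub-pairs of `(A,B)` at the
same distance, with at least one of the two sets containing more than one point. -/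
def Upsilon (A B H1 H2 : Set X) : Prop :=
  H1 ⊆ A ∧ H2 ⊆ B ∧ H1.Nonempty ∧ H2.Nonempty ∧ IsClosed H1 ∧ IsClosed H2 ∧
    Bornology.IsBounded H1 ∧ Bornology.IsBounded H2 ∧ Convex ℝ H1 ∧ Convex ℝ H2 ∧
    ProximalPair H1 H2 ∧ (¬ H1.Subsingleton ∨ ¬ H2.Subsingleton) ∧
    setD H1 H2 = setD A B

/-- `N(A,B) = sup {R(H₁,H₂)/δ(H₁,H₂) : (H₁,H₂) ∈ Υ(A,B)}`. -/
noncomputable def NN (A B : Set X) : ℝ :=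
  sSup {t : ℝ | ∃ H1 H2 : Set X, Upsilon A B H1 H2 ∧ t = RR H1 H2 / setDelta H1 H2}

/-- `(C₁,C₂) ∈ Ῡ(A,B)`: as `Υ(A,B)` but without requiring proximality. -/
def UpsilonBar (A B C1 C2 : Set X) : Prop :=
  C1 ⊆ A ∧ C2 ⊆ B ∧ C1.Nonempty ∧ C2.Nonempty ∧ IsClosed C1 ∧ IsClosed C2 ∧
    Bornology.IsBounded C1 ∧ Bornology.IsBounded C2 ∧ Convex ℝ C1 ∧ Convex ℝ C2 ∧
    (¬ C1.Subsingleton ∨ ¬ C2.Subsingleton) ∧ setD C1 C2 = setD A B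

/-- `c₀ = sup {R(C₁,C₂)/δ(C₁,C₂) : (C₁,C₂) ∈ Ῡ(A,B)}`. -/
noncomputable def cZero (A B : Set X) : ℝ :=
  sSup {t : ℝ | ∃ C1 C2 : Set X, UpsilonBar A B C1 C2 ∧ t = RR C1 C2 / setDelta C1 C2}

/-- `T` is a cyclic relatively nonexpansive mapping on `A ∪ B`. -/
def CyclicRelNonexpansive (A B : Set X) (T : X → X) : Prop :=
  Set.MapsTo T A B ∧ Set.MapsTo T B A ∧ ∀ x ∈ A, ∀ y ∈ B, ‖T x - T y‖ ≤ ‖x - y‖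


lemma isCompact_segment' (x y : X) : IsCompact (segment ℝ x y) := by
  rw [segment_eq_image ℝ x y]
  exact isCompact_Icc.image (by fun_prop)

theorem stmt0 [CompleteSpace X]
    (h : ∀ A B : Set X, A.Nonempty → B.Nonempty → IsClosed A → IsClosed B →
      Bornology.IsBounded A → Bornology.IsBounded B → Convex ℝ A → Convex ℝ B →
      SemisharpProximal A B) :
    StrictConvexSpace ℝ X := by
  apply StrictConvexSpace.of_norm_add_ne_two
  rintro x y hx hy hne habs
  -- norming functional for x + y
  have hxy0 : x + y ≠ 0 := by
    intro h0; rw [h0, norm_zero] at habs; norm_num at habs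
  obtain ⟨f, hf1, hfxy⟩ := exists_dual_vector ℝ (x + y) (norm_ne_zero_iff.mpr hxy0)
  have hfxy' : f (x + y) = 2 := by
    have := hfxy
    simp only [RCLike.ofReal_real_eq_id, id] at this
    rw [this, habs]
  have hfx_le : f x ≤ 1 := by
    calc f x ≤ ‖f x‖ := le_abs_self _
    _ ≤ ‖f‖ * ‖x‖ := f.le_opNorm x
    _ = 1 := by rw [hf1, hx]; ring
  have hfy_le : f y ≤ 1 := by
    calc f y ≤ ‖f y‖ := le_abs_self _
    _ ≤ ‖f‖ * ‖y‖ := f.le_opNorm y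
    _ = 1 := by rw [hf1, hy]; ring
  have hsum : f x + f y = 2 := by rw [← map_add]; exact hfxy'
  have hfx : f x = 1 := by linarith
  have hfy : f y = 1 := by linarith
  -- every point of the segment has norm 1
  have hseg : ∀ z ∈ segment ℝ x y, ‖z‖ = 1 := by
    rintro z ⟨a, b, ha, hb, hab, rfl⟩
    have hle : ‖a • x + b • y‖ ≤ 1 := by
      calc ‖a • x + b • y‖ ≤ ‖a • x‖ + ‖b • y‖ := norm_add_le _ _
      _ = a * ‖x‖ + b * ‖y‖ := by
          rw [norm_smul, norm_smul, Real.norm_of_nonneg ha, Real.norm_of_nonneg hb]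
      _ = 1 := by rw [hx, hy]; linarith
    have hge : (1 : ℝ) ≤ ‖a • x + b • y‖ := by
      have : f (a • x + b • y) = 1 := by
        simp [map_add, map_smul, hfx, hfy, smul_eq_mul]; linarith
      calc (1 : ℝ) = f (a • x + b • y) := this.symm
      _ ≤ ‖f (a • x + b • y)‖ := le_abs_self _
      _ ≤ ‖f‖ * ‖a • x + b • y‖ := f.le_opNorm _
      _ = ‖a • x + b • y‖ := by rw [hf1, one_mul]
    linarith
  -- apply the hypothesis with A = {0}, B = segment
  set B := segment ℝ x y with hB
  have hd : setD ({0} : Set X) B = 1 := by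
    have : {r : ℝ | ∃ a ∈ ({0} : Set X), ∃ b ∈ B, r = ‖a - b‖} = {1} := by
      ext r
      constructor
      · rintro ⟨a, ha, b, hb, rfl⟩
        simp only [Set.mem_singleton_iff] at ha
        subst ha
        simp only [zero_sub, norm_neg, Set.mem_singleton_iff]
        exact hseg b hb
      · rintro rfl
        exact ⟨0, rfl, x, left_mem_segment ℝ x y, by
          simp [hseg x (left_mem_segment ℝ x y)]⟩
    rw [setD, this, csInf_singleton]
  have hssp := h ({0} : Set X) B ⟨0, rfl⟩ ⟨x, left_mem_segment ℝ x y⟩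
    isClosed_singleton (isCompact_segment' x y).isClosed Bornology.isBounded_singleton
    (isCompact_segment' x y).isBounded (convex_singleton 0) (convex_segment x y)
  have := hssp.1 0 rfl x (left_mem_segment ℝ x y) y (right_mem_segment ℝ x y)
    (by rw [hd]; simp [hseg x (left_mem_segment ℝ x y)])
    (by rw [hd]; simp [hseg y (right_mem_segment ℝ x y)])
  exact hne this
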